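/- For every integer K ≥ 1, the triple sum satisfies Σ_{k₁=1}^{K} Σ_{k₂=1}^{K} Σ_{k₃=1}^{K} 1/(k₁² + k₂² + k₃²) ≤ (√3·π/2)·K − π/2 + 1/3. -/

import Mathlib

open Real intervalIntegral MeasureTheory


private lemma count1 (K : ℕ) (s : ℝ) :
    ∑ k ∈ Finset.Icc 1 K, (if ((k : ℝ)) ^ 2 ≤ s then (1 : ℝ) else 0) ≤ Real.sqrt s := by
  rw [Finset.sum_boole]
  have hsub : (Finset.Icc 1 K).filter (fun k : ℕ => ((k : ℝ)) ^ 2 ≤ s)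
      ⊆ Finset.Icc 1 (⌊Real.sqrt s⌋₊) := by
    intro k hk
    simp only [Finset.mem_filter, Finset.mem_Icc] at hk ⊢
    refine ⟨hk.1.1, Nat.le_floor ?_⟩
    have hs0 : (0:ℝ) ≤ s := le_trans (by positivity) hk.2
    exact (Real.le_sqrt (by positivity) hs0).mpr hk.2
  calc ((Finset.filter (fun k : ℕ => ((k : ℝ)) ^ 2 ≤ s) (Finset.Icc 1 K)).card : ℝ)
      ≤ ((Finset.Icc 1 (⌊Real.sqrt s⌋₊)).card : ℝ) := by
        exact_mod_cast Finset.card_le_card hsub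
    _ = (⌊Real.sqrt s⌋₊ : ℝ) := by simp [Nat.card_Icc]
    _ ≤ Real.sqrt s := Nat.floor_le (Real.sqrt_nonneg s)

private lemma sum_le_int (K : ℕ) (f : ℝ → ℝ) (hf : AntitoneOn f (Set.Icc 0 (K : ℝ))) :
    ∑ k ∈ Finset.Icc 1 K, f k ≤ ∫ x in (0:ℝ)..(K:ℝ), f x := by
  have hf' : AntitoneOn f (Set.Icc (0:ℝ) (0 + (K:ℕ))) := by simpa using hf
  have key := hf'.sum_le_integral
  rw [zero_add] at key
  refine le_trans (le_of_eq ?_) key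
  rw [← Finset.Ico_add_one_right_eq_Icc, Finset.sum_Ico_eq_sum_range]
  refine Finset.sum_congr (by simp) fun i _ => ?_
  push_cast
  ring_nf


private lemma int_sqrt01 : ∫ x in (0:ℝ)..1, Real.sqrt (1 - x ^ 2) = π / 4 := by
  have hc : Continuous fun x : ℝ => Real.sqrt (1 - x ^ 2) :=
    (continuous_const.sub (continuous_pow 2)).sqrt
  have hneg : ∫ x in (-1:ℝ)..(0:ℝ), Real.sqrt (1 - x ^ 2)
      = ∫ x in (0:ℝ)..1, Real.sqrt (1 - x ^ 2) := by
    have := intervalIntegral.integral_comp_neg (a := (0:ℝ)) (b := 1)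
      (fun x : ℝ => Real.sqrt (1 - x ^ 2))
    simp only [neg_sq, neg_zero] at this
    exact this.symm
  have hadd := intervalIntegral.integral_add_adjacent_intervals
    (μ := MeasureTheory.volume) (a := (-1:ℝ)) (b := 0) (c := 1) (f := fun x : ℝ => Real.sqrt (1 - x ^ 2))
    (hc.intervalIntegrable _ _) (hc.intervalIntegrable _ _)
  have h := integral_sqrt_one_sub_sq
  rw [← hadd, hneg] at h
  linarith

private lemma int_quarter (s : ℝ) (hs : 0 ≤ s) :
    ∫ x in (0:ℝ)..Real.sqrt s, Real.sqrt (s - x ^ 2) = π / 4 * s := by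
  rcases eq_or_lt_of_le hs with h | h
  · simp [← h]
  · set r := Real.sqrt s with hr
    have hr0 : 0 < r := Real.sqrt_pos.mpr h
    have hrs : r ^ 2 = s := Real.sq_sqrt hs
    have heq : Set.EqOn (fun x : ℝ => Real.sqrt (s - (r * x) ^ 2))
        (fun x : ℝ => r * Real.sqrt (1 - x ^ 2)) (Set.uIcc (0:ℝ) 1) := by
      intro x _
      simp only
      rw [show s - (r * x) ^ 2 = r ^ 2 * (1 - x ^ 2) by rw [← hrs]; ring,
        Real.sqrt_mul (sq_nonneg r), Real.sqrt_sq hr0.le]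
    have hcomp := intervalIntegral.integral_comp_mul_left (a := (0:ℝ)) (b := 1) (c := r)
      (fun x : ℝ => Real.sqrt (s - x ^ 2)) (ne_of_gt hr0)
    calc ∫ x in (0:ℝ)..r, Real.sqrt (s - x ^ 2)
        = r • ∫ x in (0:ℝ)..1, Real.sqrt (s - (r * x) ^ 2) := by
          rw [hcomp, mul_zero, mul_one, smul_smul, mul_inv_cancel₀ (ne_of_gt hr0), one_smul]
      _ = r * ∫ x in (0:ℝ)..1, r * Real.sqrt (1 - x ^ 2) := by
          rw [intervalIntegral.integral_congr heq]; simp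
      _ = r * (r * (π / 4)) := by rw [intervalIntegral.integral_const_mul, int_sqrt01]
      _ = π / 4 * s := by rw [← hrs]; ring

private lemma int_quarter_le (s : ℝ) (hs : 0 ≤ s) (c : ℝ) (hc : 0 ≤ c) :
    ∫ x in (0:ℝ)..c, Real.sqrt (s - x ^ 2) ≤ π / 4 * s := by
  have hcont : Continuous fun x : ℝ => Real.sqrt (s - x ^ 2) :=
    (continuous_const.sub (continuous_pow 2)).sqrt
  set r := Real.sqrt s with hr
  have hadd : ∀ b d : ℝ, (∫ x in (0:ℝ)..b, Real.sqrt (s - x ^ 2))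
      + ∫ x in b..d, Real.sqrt (s - x ^ 2) = ∫ x in (0:ℝ)..d, Real.sqrt (s - x ^ 2) :=
    fun b d => intervalIntegral.integral_add_adjacent_intervals
      (hcont.intervalIntegrable _ _) (hcont.intervalIntegrable _ _)
  rcases le_total c r with h | h
  · have h2 : 0 ≤ ∫ x in c..r, Real.sqrt (s - x ^ 2) :=
      intervalIntegral.integral_nonneg h (fun x _ => Real.sqrt_nonneg _)
    have := hadd c r
    rw [← int_quarter s hs, ← hr, ← this]
    linarith
  · have h0 : ∫ x in r..c, Real.sqrt (s - x ^ 2) = 0 := by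
      have heq : Set.EqOn (fun x : ℝ => Real.sqrt (s - x ^ 2)) (fun _ => (0:ℝ))
          (Set.uIcc r c) := by
        intro x hx
        rw [Set.uIcc_of_le h] at hx
        have h1 : r ≤ x := hx.1
        have h2 : s - x ^ 2 ≤ 0 := by
          nlinarith [Real.sq_sqrt hs, Real.sqrt_nonneg s]
        simpa using Real.sqrt_eq_zero'.mpr h2
      rw [intervalIntegral.integral_congr heq]
      simp
    have := hadd r c
    rw [h0, add_zero] at this
    rw [← this, int_quarter s hs]

private lemma count2 (K : ℕ) (s : ℝ) (hs : 0 ≤ s) :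
    ∑ k₂ ∈ Finset.Icc 1 K, ∑ k₃ ∈ Finset.Icc 1 K,
      (if ((k₂ : ℝ)) ^ 2 + ((k₃ : ℝ)) ^ 2 ≤ s then (1 : ℝ) else 0) ≤ π / 4 * s := by
  have step1 : ∀ k₂ ∈ Finset.Icc 1 K,
      (∑ k₃ ∈ Finset.Icc 1 K,
        (if ((k₂ : ℝ)) ^ 2 + ((k₃ : ℝ)) ^ 2 ≤ s then (1 : ℝ) else 0))
      ≤ Real.sqrt (s - ((k₂ : ℝ)) ^ 2) := by
    intro k₂ _
    refine le_trans (le_of_eq (Finset.sum_congr rfl fun k₃ _ => ?_)) (count1 K _)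
    exact if_congr (by constructor <;> intro <;> linarith) rfl rfl
  have anti : AntitoneOn (fun x : ℝ => Real.sqrt (s - x ^ 2)) (Set.Icc 0 (K : ℝ)) := by
    intro x hx y hy hxy
    exact Real.sqrt_le_sqrt (by nlinarith [hx.1])
  calc ∑ k₂ ∈ Finset.Icc 1 K, ∑ k₃ ∈ Finset.Icc 1 K,
        (if ((k₂ : ℝ)) ^ 2 + ((k₃ : ℝ)) ^ 2 ≤ s then (1 : ℝ) else 0)
      ≤ ∑ k₂ ∈ Finset.Icc 1 K, Real.sqrt (s - ((k₂ : ℝ)) ^ 2) := Finset.sum_le_sum step1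
    _ ≤ ∫ x in (0:ℝ)..(K:ℝ), Real.sqrt (s - x ^ 2) := sum_le_int K _ anti
    _ ≤ π / 4 * s := int_quarter_le s hs K (by positivity)

private lemma count3 (K : ℕ) (t : ℝ) (ht : 0 ≤ t) :
    ∑ k₁ ∈ Finset.Icc 1 K, ∑ k₂ ∈ Finset.Icc 1 K, ∑ k₃ ∈ Finset.Icc 1 K,
      (if ((k₁ : ℝ)) ^ 2 + ((k₂ : ℝ)) ^ 2 + ((k₃ : ℝ)) ^ 2 ≤ t then (1 : ℝ) else 0)
      ≤ π / 6 * (t * Real.sqrt t) := by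
  have step1 : ∀ k₁ ∈ Finset.Icc 1 K,
      (∑ k₂ ∈ Finset.Icc 1 K, ∑ k₃ ∈ Finset.Icc 1 K,
        (if ((k₁ : ℝ)) ^ 2 + ((k₂ : ℝ)) ^ 2 + ((k₃ : ℝ)) ^ 2 ≤ t then (1 : ℝ) else 0))
      ≤ π / 4 * (Real.sqrt (t - ((k₁ : ℝ)) ^ 2)) ^ 2 := by
    intro k₁ _
    rcases le_or_gt 0 (t - ((k₁ : ℝ)) ^ 2) with h | h
    · rw [Real.sq_sqrt h]
      refine le_trans (le_of_eq (Finset.sum_congr rfl fun k₂ _ =>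
        Finset.sum_congr rfl fun k₃ _ => ?_)) (count2 K _ h)
      exact if_congr (by constructor <;> intro <;> linarith) rfl rfl
    · have hz : (∑ k₂ ∈ Finset.Icc 1 K, ∑ k₃ ∈ Finset.Icc 1 K,
          (if ((k₁ : ℝ)) ^ 2 + ((k₂ : ℝ)) ^ 2 + ((k₃ : ℝ)) ^ 2 ≤ t then (1 : ℝ) else 0)) = 0 :=
        Finset.sum_eq_zero fun k₂ _ => Finset.sum_eq_zero fun k₃ _ => by
          rw [if_neg]
          intro hcon
          nlinarith [sq_nonneg ((k₂:ℝ)), sq_nonneg ((k₃:ℝ))]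
      rw [hz]
      positivity
  have anti : AntitoneOn (fun x : ℝ => π / 4 * (Real.sqrt (t - x ^ 2)) ^ 2)
      (Set.Icc 0 (K : ℝ)) := by
    intro x hx y hy hxy
    have h1 : Real.sqrt (t - y ^ 2) ≤ Real.sqrt (t - x ^ 2) :=
      Real.sqrt_le_sqrt (by nlinarith [hx.1])
    have h2 : (0:ℝ) ≤ Real.sqrt (t - y ^ 2) := Real.sqrt_nonneg _
    have := pow_le_pow_left₀ h2 h1 2
    simp only
    nlinarith [Real.pi_pos]
  have hint : ∫ x in (0:ℝ)..(K:ℝ), π / 4 * (Real.sqrt (t - x ^ 2)) ^ 2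
      ≤ π / 6 * (t * Real.sqrt t) := by
    set r := Real.sqrt t with hr
    have hrs : r ^ 2 = t := Real.sq_sqrt ht
    have hr0 : 0 ≤ r := Real.sqrt_nonneg t
    have hcont : Continuous fun x : ℝ => π / 4 * (Real.sqrt (t - x ^ 2)) ^ 2 :=
      continuous_const.mul (((continuous_const.sub (continuous_pow 2)).sqrt).pow 2)
    have hadd : ∀ b d : ℝ, (∫ x in (0:ℝ)..b, π / 4 * (Real.sqrt (t - x ^ 2)) ^ 2)
        + ∫ x in b..d, π / 4 * (Real.sqrt (t - x ^ 2)) ^ 2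
        = ∫ x in (0:ℝ)..d, π / 4 * (Real.sqrt (t - x ^ 2)) ^ 2 :=
      fun b d => intervalIntegral.integral_add_adjacent_intervals
        (hcont.intervalIntegrable _ _) (hcont.intervalIntegrable _ _)
    have hmain : ∫ x in (0:ℝ)..r, π / 4 * (Real.sqrt (t - x ^ 2)) ^ 2
        = π / 6 * (t * r) := by
      have heq : Set.EqOn (fun x : ℝ => π / 4 * (Real.sqrt (t - x ^ 2)) ^ 2)
          (fun x : ℝ => π / 4 * (t - x ^ 2)) (Set.uIcc (0:ℝ) r) := by
        intro x hx
        rw [Set.uIcc_of_le hr0] at hx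
        have : 0 ≤ t - x ^ 2 := by nlinarith [hx.1, hx.2]
        simp only
        rw [Real.sq_sqrt this]
      rw [intervalIntegral.integral_congr heq, intervalIntegral.integral_const_mul]
      have : ∫ x in (0:ℝ)..r, (t - x ^ 2) = t * r - r ^ 3 / 3 := by
        rw [intervalIntegral.integral_sub intervalIntegrable_const
          ((continuous_pow 2).intervalIntegrable _ _), integral_pow,
          intervalIntegral.integral_const]
        norm_num
        ring
      rw [this]
      have hr3 : r ^ 3 = t * r := by rw [pow_succ, hrs]
      rw [hr3]; ring
    rcases le_total (K : ℝ) r with h | h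
    · have h2 : 0 ≤ ∫ x in (K:ℝ)..r, π / 4 * (Real.sqrt (t - x ^ 2)) ^ 2 :=
        intervalIntegral.integral_nonneg h (fun x _ => by positivity)
      have := hadd (K : ℝ) r
      rw [← hmain, ← this]
      linarith
    · have h0 : ∫ x in r..(K:ℝ), π / 4 * (Real.sqrt (t - x ^ 2)) ^ 2 = 0 := by
        have heq : Set.EqOn (fun x : ℝ => π / 4 * (Real.sqrt (t - x ^ 2)) ^ 2)
            (fun _ => (0:ℝ)) (Set.uIcc r (K : ℝ)) := by
          intro x hx
          rw [Set.uIcc_of_le h] at hx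
          have h2 : t - x ^ 2 ≤ 0 := by nlinarith [hx.1, hr0]
          simp only
          rw [Real.sqrt_eq_zero'.mpr h2]
          ring
        rw [intervalIntegral.integral_congr heq]
        simp
      have := hadd r (K : ℝ)
      rw [h0, add_zero] at this
      rw [← this, hmain]
  calc ∑ k₁ ∈ Finset.Icc 1 K, ∑ k₂ ∈ Finset.Icc 1 K, ∑ k₃ ∈ Finset.Icc 1 K,
        (if ((k₁ : ℝ)) ^ 2 + ((k₂ : ℝ)) ^ 2 + ((k₃ : ℝ)) ^ 2 ≤ t then (1 : ℝ) else 0)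
      ≤ ∑ k₁ ∈ Finset.Icc 1 K, π / 4 * (Real.sqrt (t - ((k₁ : ℝ)) ^ 2)) ^ 2 :=
        Finset.sum_le_sum step1
    _ ≤ ∫ x in (0:ℝ)..(K:ℝ), π / 4 * (Real.sqrt (t - x ^ 2)) ^ 2 := sum_le_int K _ anti
    _ ≤ π / 6 * (t * Real.sqrt t) := hint


/-- `Σ_{k₁,k₂,k₃=1}^{K} 1/(k₁² + k₂² + k₃²) ≤ (√3 π/2) K − π/2 + 1/3`. -/
theorem sum_inv_norm_sq_3d (K : ℕ) (hK : 1 ≤ K) :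
    ∑ k₁ ∈ Finset.Icc 1 K, ∑ k₂ ∈ Finset.Icc 1 K, ∑ k₃ ∈ Finset.Icc 1 K,
        (1 : ℝ) / ((k₁ : ℝ) ^ 2 + (k₂ : ℝ) ^ 2 + (k₃ : ℝ) ^ 2)
      ≤ Real.sqrt 3 * π / 2 * K - π / 2 + 1 / 3 := by
  have hK1 : (1:ℝ) ≤ (K:ℝ) := by exact_mod_cast hK
  set M : ℝ := 3 * (K:ℝ)^2 with hM
  have hM3 : (3:ℝ) ≤ M := by nlinarith
  set A : Finset ℕ := Finset.Icc 1 K with hA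
  set B : Finset (ℕ × ℕ × ℕ) := A ×ˢ (A ×ˢ A) with hB
  set m : ℕ × ℕ × ℕ → ℝ := fun p => (p.1 : ℝ)^2 + (p.2.1 : ℝ)^2 + (p.2.2 : ℝ)^2 with hm
  set f : ℝ → ℝ := fun t => (t^2)⁻¹ with hf
  set g : ℕ × ℕ × ℕ → ℝ → ℝ :=
    fun p t => f t - Set.indicator {x : ℝ | x ≤ m p} f t with hg
  -- bounds on m p for p ∈ B
  have hmB : ∀ p ∈ B, 3 ≤ m p ∧ m p ≤ M := by
    intro p hp
    rw [hB, Finset.mem_product, Finset.mem_product] at hp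
    have h1 := hp.1
    have h2 := hp.2.1
    have h3 := hp.2.2
    rw [hA, Finset.mem_Icc] at h1 h2 h3
    have c1 : (1:ℝ) ≤ (p.1:ℝ) := by exact_mod_cast h1.1
    have c2 : (1:ℝ) ≤ (p.2.1:ℝ) := by exact_mod_cast h2.1
    have c3 : (1:ℝ) ≤ (p.2.2:ℝ) := by exact_mod_cast h3.1
    have d1 : (p.1:ℝ) ≤ (K:ℝ) := by exact_mod_cast h1.2
    have d2 : (p.2.1:ℝ) ≤ (K:ℝ) := by exact_mod_cast h2.2
    have d3 : (p.2.2:ℝ) ≤ (K:ℝ) := by exact_mod_cast h3.2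
    constructor <;> · rw [hm]; simp only; nlinarith
  -- integrability of f
  have hfi : ∀ a b : ℝ, 0 < a → 0 < b → IntervalIntegrable f volume a b := by
    intro a b ha hb
    apply ContinuousOn.intervalIntegrable
    apply ContinuousOn.inv₀ (continuous_pow 2).continuousOn
    intro x hx
    have : 0 < x := by
      rcases Set.mem_uIcc.mp hx with ⟨h1, _⟩ | ⟨h1, _⟩ <;> linarith
    positivity
  have hii : ∀ p : ℕ × ℕ × ℕ, 3 ≤ m p →
      IntervalIntegrable (Set.indicator {x : ℝ | x ≤ m p} f) volume 3 M := by
    intro p _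
    have h := hfi 3 M (by norm_num) (by linarith)
    exact ⟨h.1.indicator measurableSet_Iic, h.2.indicator measurableSet_Iic⟩
  have hgi : ∀ p : ℕ × ℕ × ℕ, 3 ≤ m p → IntervalIntegrable (g p) volume 3 M := by
    intro p hp
    exact (hfi 3 M (by norm_num) (by linarith)).sub (hii p hp)
  -- Step A : each term as 1/M + integral
  have stepA : ∀ p ∈ B, (1:ℝ) / m p = 1 / M + ∫ t in (3:ℝ)..M, g p t := by
    intro p hp
    obtain ⟨hm3, hmM⟩ := hmB p hp
    have hmpos : (0:ℝ) < m p := by linarith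
    have hz : f = fun t : ℝ => t ^ (-2 : ℤ) := by
      funext t; rw [hf]; simp [zpow_neg]
    have h1 : ∫ t in (m p)..M, f t = (m p)⁻¹ - M⁻¹ := by
      rw [hz, integral_zpow (Or.inr ⟨by norm_num,
        Set.notMem_uIcc_of_lt hmpos (by linarith)⟩)]
      norm_num
      ring
    have h3 : ∫ t in (3:ℝ)..M, Set.indicator {x : ℝ | x ≤ m p} f t
        = ∫ t in (3:ℝ)..(m p), f t :=
      intervalIntegral.integral_indicator ⟨hm3, hmM⟩
    have h2 : (∫ t in (3:ℝ)..(m p), f t) + ∫ t in (m p)..M, f t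
        = ∫ t in (3:ℝ)..M, f t :=
      intervalIntegral.integral_add_adjacent_intervals
        (hfi 3 (m p) (by norm_num) hmpos) (hfi (m p) M hmpos (by linarith))
    have h4 : ∫ t in (3:ℝ)..M, g p t = (m p)⁻¹ - M⁻¹ := by
      rw [hg]
      simp only
      rw [intervalIntegral.integral_sub (hfi 3 M (by norm_num) (by linarith)) (hii p hm3), h3]
      rw [← h1]; linarith [h2]
    rw [h4, one_div, one_div]
    ring
  -- rewrite the triple sum as a sum over B
  have hsum : ∑ k₁ ∈ Finset.Icc 1 K, ∑ k₂ ∈ Finset.Icc 1 K, ∑ k₃ ∈ Finset.Icc 1 K,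
        (1 : ℝ) / ((k₁ : ℝ) ^ 2 + (k₂ : ℝ) ^ 2 + (k₃ : ℝ) ^ 2)
      = ∑ p ∈ B, (1:ℝ) / m p := by
    rw [hB, Finset.sum_product]
    refine Finset.sum_congr rfl fun k₁ _ => ?_
    rw [Finset.sum_product]
  have hcard : (B.card : ℝ) = (K:ℝ)^3 := by
    rw [hB, Finset.card_product, Finset.card_product, hA, Nat.card_Icc]
    push_cast
    ring
  -- the pointwise bound
  have hpt : ∀ t ∈ Set.Icc (3:ℝ) M, ∑ p ∈ B, g p t ≤ π / 6 * (Real.sqrt t)⁻¹ := by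
    intro t htI
    have ht3 : (3:ℝ) ≤ t := htI.1
    have ht0 : (0:ℝ) < t := by linarith
    have hft : (0:ℝ) ≤ f t := by rw [hf]; positivity
    have hterm : ∀ p ∈ B, g p t ≤ (if m p ≤ t then (1:ℝ) else 0) * f t := by
      intro p _
      rw [hg]
      simp only
      by_cases h : t ≤ m p
      · rw [Set.indicator_of_mem (show t ∈ {x : ℝ | x ≤ m p} from h) f, sub_self]
        positivity
      · rw [Set.indicator_of_notMem (show t ∉ {x : ℝ | x ≤ m p} from h) f, sub_zero, if_pos (le_of_lt (lt_of_not_ge h)), one_mul]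
    have hcount : ∑ p ∈ B, (if m p ≤ t then (1:ℝ) else 0) ≤ π / 6 * (t * Real.sqrt t) := by
      have := count3 K t ht0.le
      refine le_trans (le_of_eq ?_) this
      rw [hB, Finset.sum_product]
      refine Finset.sum_congr rfl fun k₁ _ => ?_
      rw [Finset.sum_product]
    have hmul : (π / 6 * (t * Real.sqrt t)) * f t = π / 6 * (Real.sqrt t)⁻¹ := by
      have hst : Real.sqrt t * Real.sqrt t = t := Real.mul_self_sqrt ht0.le
      have hsp : (0:ℝ) < Real.sqrt t := Real.sqrt_pos.mpr ht0
      rw [hf]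
      field_simp
      linear_combination hst
    calc ∑ p ∈ B, g p t ≤ ∑ p ∈ B, (if m p ≤ t then (1:ℝ) else 0) * f t :=
          Finset.sum_le_sum hterm
      _ = (∑ p ∈ B, (if m p ≤ t then (1:ℝ) else 0)) * f t := by rw [Finset.sum_mul]
      _ ≤ (π / 6 * (t * Real.sqrt t)) * f t := mul_le_mul_of_nonneg_right hcount hft
      _ = π / 6 * (Real.sqrt t)⁻¹ := hmul
  -- the bounding integral
  have hbint : ∫ t in (3:ℝ)..M, π / 6 * (Real.sqrt t)⁻¹
      = π / 6 * (2 * (Real.sqrt 3 * (K:ℝ)) - 2 * Real.sqrt 3) := by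
    rw [intervalIntegral.integral_const_mul]
    have heq : Set.EqOn (fun t : ℝ => (Real.sqrt t)⁻¹)
        (fun t : ℝ => t ^ (-(1/2) : ℝ)) (Set.uIcc (3:ℝ) M) := by
      intro t htI
      rw [Set.uIcc_of_le hM3] at htI
      have ht0 : (0:ℝ) ≤ t := by linarith [htI.1]
      simp only
      rw [Real.rpow_neg ht0, Real.sqrt_eq_rpow]
    rw [intervalIntegral.integral_congr heq,
      integral_rpow (Or.inl (by norm_num : (-1:ℝ) < -(1/2)))]
    have hMr : M ^ (-(1/2:ℝ) + 1) = Real.sqrt 3 * (K:ℝ) := by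
      rw [show (-(1/2:ℝ) + 1) = 1/2 by norm_num, ← Real.sqrt_eq_rpow, hM,
        Real.sqrt_mul (by norm_num : (0:ℝ) ≤ 3), Real.sqrt_sq (by positivity : (0:ℝ) ≤ (K:ℝ))]
    have h3r : (3:ℝ) ^ (-(1/2:ℝ) + 1) = Real.sqrt 3 := by
      rw [show (-(1/2:ℝ) + 1) = 1/2 by norm_num, ← Real.sqrt_eq_rpow]
    rw [hMr, h3r]
    ring_nf
  -- integrability of the bound and of the sum
  have hbi : IntervalIntegrable (fun t : ℝ => π / 6 * (Real.sqrt t)⁻¹) volume 3 M := by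
    apply ContinuousOn.intervalIntegrable
    apply ContinuousOn.mul continuousOn_const
    apply ContinuousOn.inv₀ Real.continuous_sqrt.continuousOn
    intro x hx
    have : 0 < x := by
      rcases Set.mem_uIcc.mp hx with ⟨h1, _⟩ | ⟨h1, _⟩ <;> linarith
    positivity
  have hgiB : ∀ p ∈ B, IntervalIntegrable (g p) volume 3 M :=
    fun p hp => hgi p (hmB p hp).1
  have hsi : IntervalIntegrable (fun t => ∑ p ∈ B, g p t) volume 3 M := by
    have h := IntervalIntegrable.sum B (μ := volume) (a := 3) (b := M) hgiB
    have he : (∑ p ∈ B, g p) = fun t => ∑ p ∈ B, g p t := by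
      funext t; exact Finset.sum_apply t B g
    rwa [he] at h
  -- put it all together
  have main : ∑ p ∈ B, (1:ℝ) / m p
      ≤ (K:ℝ)/3 + π / 6 * (2 * (Real.sqrt 3 * (K:ℝ)) - 2 * Real.sqrt 3) := by
    rw [Finset.sum_congr rfl stepA, Finset.sum_add_distrib, Finset.sum_const, nsmul_eq_mul]
    have e1 : (B.card : ℝ) * (1 / M) = (K:ℝ)/3 := by
      rw [hcard, hM]
      field_simp
    rw [e1]
    have e2 : ∑ p ∈ B, ∫ t in (3:ℝ)..M, g p t = ∫ t in (3:ℝ)..M, ∑ p ∈ B, g p t :=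
      (intervalIntegral.integral_finset_sum hgiB).symm
    rw [e2]
    have e3 : ∫ t in (3:ℝ)..M, ∑ p ∈ B, g p t
        ≤ ∫ t in (3:ℝ)..M, π / 6 * (Real.sqrt t)⁻¹ :=
      intervalIntegral.integral_mono_on hM3 hsi hbi hpt
    rw [← hbint]
    linarith
  rw [hsum]
  refine le_trans main ?_
  -- final arithmetic
  have hs3 : Real.sqrt 3 ^ 2 = 3 := Real.sq_sqrt (by norm_num)
  have hs3n : (0:ℝ) ≤ Real.sqrt 3 := Real.sqrt_nonneg 3
  have hs3l : (1.73:ℝ) ≤ Real.sqrt 3 := by nlinarith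
  have hpi1 : (3.14:ℝ) < π := Real.pi_gt_d2
  have hpi2 : π < 3.15 := Real.pi_lt_d2
  nlinarith [mul_le_mul hpi1.le hs3l (by norm_num) Real.pi_pos.le,
    mul_nonneg (mul_nonneg Real.pi_pos.le hs3n) (sub_nonneg.mpr hK1)]
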